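/- Define 𝒟 ⊂ ℂ-symmetric 2×2 matrices as the set of w = [[γ+iδ, iβ],[iβ, −γ+iδ]] with δ > |β|, 1 ≤ γ²+δ²−β², and 0 ≤ γ ≤ 1/2. Then w ↦ (1/(δ+β))·[[1,−γ],[−γ, γ²+δ²−β²]] maps 𝒟 bijectively onto the set of 2×2 symmetric positive definite matrices [[φ,χ],[χ,ψ]] with φ ≤ ψ and −φ ≤ 2χ ≤ 0 (the Lagrange–Hermite reduced domain for binary quadratic forms), intersected with the image of the map over all δ > |β|. -/

import Mathlib

/-- The substitution (β,γ,δ) ↦ (φ,χ,ψ) = (1/(δ+β), −γ/(δ+β), (γ²+δ²−β²)/(δ+β)). -/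
noncomputable def phiChiPsi (p : ℝ × ℝ × ℝ) : ℝ × ℝ × ℝ :=
  (1 / (p.2.2 + p.1), -p.2.1 / (p.2.2 + p.1),
    (p.2.1 ^ 2 + p.2.2 ^ 2 - p.1 ^ 2) / (p.2.2 + p.1))

lemma key (b c d : ℝ) (h : |b| < d) :
    (1 ≤ c ^ 2 + d ^ 2 - b ^ 2 ∧ 0 ≤ c ∧ c ≤ 1 / 2) ↔
      ((phiChiPsi (b, c, d)).1 ≤ (phiChiPsi (b, c, d)).2.2 ∧
        -(phiChiPsi (b, c, d)).1 ≤ 2 * (phiChiPsi (b, c, d)).2.1 ∧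
        2 * (phiChiPsi (b, c, d)).2.1 ≤ 0) := by
  have hb := abs_lt.mp h
  have hpos : 0 < d + b := by linarith [hb.1]
  simp only [phiChiPsi]
  have e : ∀ x y : ℝ, x / (d + b) ≤ y / (d + b) ↔ x ≤ y := fun x y =>
    div_le_div_iff_of_pos_right hpos
  constructor
  · rintro ⟨h1, h2, h3⟩
    refine ⟨?_, ?_, ?_⟩
    · exact (e 1 _).mpr h1
    · rw [show -(1 / (d + b)) = (-1) / (d + b) by ring,
        show 2 * (-c / (d + b)) = (-(2 * c)) / (d + b) by ring, e]
      linarith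
    · rw [show 2 * (-c / (d + b)) = (-(2 * c)) / (d + b) by ring,
        show (0 : ℝ) = 0 / (d + b) by simp, e]
      linarith
  · rintro ⟨h1, h2, h3⟩
    rw [e] at h1
    rw [show -(1 / (d + b)) = (-1) / (d + b) by ring,
      show 2 * (-c / (d + b)) = (-(2 * c)) / (d + b) by ring, e] at h2
    rw [show 2 * (-c / (d + b)) = (-(2 * c)) / (d + b) by ring,
      show (0 : ℝ) = 0 / (d + b) by simp, e] at h3
    exact ⟨h1, by linarith, by linarith⟩

lemma inj : Set.InjOn phiChiPsi {p : ℝ × ℝ × ℝ | |p.1| < p.2.2} := by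
  rintro ⟨b, c, d⟩ hp ⟨b', c', d'⟩ hq heq
  simp only [Set.mem_setOf_eq] at hp hq
  have hpos : 0 < d + b := by have := abs_lt.mp hp; linarith [this.1]
  have hpos' : 0 < d' + b' := by have := abs_lt.mp hq; linarith [this.1]
  simp only [phiChiPsi, Prod.mk.injEq] at heq
  obtain ⟨e1, e2, e3⟩ := heq
  have hsum : d + b = d' + b' := by
    field_simp at e1; linarith
  have hc : c = c' := by
    rw [hsum] at e2
    field_simp at e2
    linarith
  have hdiff : d ^ 2 - b ^ 2 = d' ^ 2 - b' ^ 2 := by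
    rw [hsum, hc] at e3
    field_simp [ne_of_gt hpos'] at e3
    nlinarith [e3]
  have hmb : d - b = d' - b' := by
    have h1 : (d - b) * (d + b) = (d' - b') * (d' + b') := by nlinarith
    rw [hsum] at h1
    exact mul_right_cancel₀ (ne_of_gt hpos') h1
  have hd : d = d' := by linarith
  have hbb : b = b' := by linarith
  simp [hbb, hc, hd]

theorem stmt19 :
    (∀ b c d : ℝ, |b| < d →
      ((1 ≤ c ^ 2 + d ^ 2 - b ^ 2 ∧ 0 ≤ c ∧ c ≤ 1 / 2) ↔
        ((phiChiPsi (b, c, d)).1 ≤ (phiChiPsi (b, c, d)).2.2 ∧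
          -(phiChiPsi (b, c, d)).1 ≤ 2 * (phiChiPsi (b, c, d)).2.1 ∧
          2 * (phiChiPsi (b, c, d)).2.1 ≤ 0))) ∧
    Set.BijOn phiChiPsi
      {p : ℝ × ℝ × ℝ | |p.1| < p.2.2 ∧ 1 ≤ p.2.1 ^ 2 + p.2.2 ^ 2 - p.1 ^ 2 ∧
        0 ≤ p.2.1 ∧ p.2.1 ≤ 1 / 2}
      ({q : ℝ × ℝ × ℝ | q.1 ≤ q.2.2 ∧ -q.1 ≤ 2 * q.2.1 ∧ 2 * q.2.1 ≤ 0} ∩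
        phiChiPsi '' {p : ℝ × ℝ × ℝ | |p.1| < p.2.2}) := by
  refine ⟨fun b c d h => key b c d h, ?_, ?_, ?_⟩
  · rintro ⟨b, c, d⟩ ⟨h1, h2, h3, h4⟩
    refine ⟨(key b c d h1).mp ⟨h2, h3, h4⟩, ⟨(b, c, d), h1, rfl⟩⟩
  · exact inj.mono fun p hp => hp.1
  · rintro ⟨x, y, z⟩ ⟨hineq, ⟨⟨b, c, d⟩, hbd, heq⟩⟩
    refine ⟨(b, c, d), ⟨hbd, ?_⟩, heq⟩
    apply (key b c d hbd).mpr
    rw [heq]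
    exact hineq
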